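/- arXiv:1210.3765 — 3 statements merged into one kernel-verified Lean document; each statement's English description precedes it below -/
import Mathlib

section
/- Global optimality condition (Theorem 1): consider minimizing P(x) = ½ xᵀ A x − aᵀx − a₀ subject to g_k(x) = ½ xᵀ B_k x − b_kᵀ x − β_k ≤ 0 for k = 1,…,m, with A and each B_k symmetric. Suppose σ̄ ∈ ℝ^m satisfies σ̄ ≥ 0, and x̄ ∈ ℝ^n satisfies the stationarity condition G(σ̄) x̄ = F(σ̄), the feasibility condition g(x̄) ≤ 0, and the complementary slackness σ̄_k · g_k(x̄) = 0 for each k, where G(σ̄) = A + Σ_k σ̄_k B_k and F(σ̄) = a + Σ_k σ̄_k b_k. If G(σ̄) is positive semidefinite, then x̄ is a global minimizer of P over the feasible set {x : g(x) ≤ 0}. -/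
open Matrix
open scoped BigOperators

lemma dp_sum' {n m : ℕ} (y : Fin n → ℝ) (c : Fin m → Fin n → ℝ) :
    y ⬝ᵥ (∑ k, c k) = ∑ k, y ⬝ᵥ c k := by
  simp only [dotProduct, Finset.sum_apply, Finset.mul_sum]
  exact Finset.sum_comm

lemma sum_mv' {n m : ℕ} (σb : Fin m → ℝ) (B : Fin m → Matrix (Fin n) (Fin n) ℝ) (y : Fin n → ℝ) :
    (∑ k, σb k • B k) *ᵥ y = ∑ k, σb k • (B k *ᵥ y) := by
  ext i
  simp only [Matrix.mulVec, dotProduct, Finset.sum_apply, Matrix.sum_apply,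
    Matrix.smul_apply, Pi.smul_apply, smul_eq_mul, Finset.sum_mul, Finset.mul_sum]
  rw [Finset.sum_comm]
  exact Finset.sum_congr rfl fun j _ => Finset.sum_congr rfl fun k _ => by ring

lemma quad_expand' {n m : ℕ} (A : Matrix (Fin n) (Fin n) ℝ) (B : Fin m → Matrix (Fin n) (Fin n) ℝ)
    (σb : Fin m → ℝ) (y : Fin n → ℝ) :
    y ⬝ᵥ ((A + ∑ k, σb k • B k) *ᵥ y) = y ⬝ᵥ (A *ᵥ y) + ∑ k, σb k * (y ⬝ᵥ (B k *ᵥ y)) := by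
  rw [Matrix.add_mulVec, dotProduct_add, sum_mv', dp_sum']
  simp [dotProduct_smul, smul_eq_mul]

lemma lin_expand' {n m : ℕ} (a : Fin n → ℝ) (b : Fin m → Fin n → ℝ) (σb : Fin m → ℝ) (y : Fin n → ℝ) :
    (a + ∑ k, σb k • b k) ⬝ᵥ y = a ⬝ᵥ y + ∑ k, σb k * (b k ⬝ᵥ y) := by
  rw [add_dotProduct, dotProduct_comm (∑ k, σb k • b k) y, dp_sum']
  simp only [dotProduct_smul, smul_eq_mul]
  exact congrArg (a ⬝ᵥ y + ·)
    (Finset.sum_congr rfl fun k _ => by rw [dotProduct_comm y (b k)])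

lemma symm_dp' {n : ℕ} (G : Matrix (Fin n) (Fin n) ℝ) (h : Gᵀ = G) (x y : Fin n → ℝ) :
    x ⬝ᵥ (G *ᵥ y) = y ⬝ᵥ (G *ᵥ x) := by
  rw [Matrix.dotProduct_mulVec x G y]
  conv_lhs => rw [← h]
  rw [Matrix.vecMul_transpose]
  exact dotProduct_comm (G *ᵥ x) y

/-- Global optimality condition (Theorem 1). -/
theorem global_optimality_condition
    (n m : ℕ)
    (A : Matrix (Fin n) (Fin n) ℝ) (B : Fin m → Matrix (Fin n) (Fin n) ℝ)
    (a : Fin n → ℝ) (b : Fin m → Fin n → ℝ) (a₀ : ℝ) (β : Fin m → ℝ)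
    (hA : A.IsSymm) (hB : ∀ k, (B k).IsSymm)
    (P : (Fin n → ℝ) → ℝ)
    (hP : ∀ x, P x = (1 / 2) * (x ⬝ᵥ (A *ᵥ x)) - a ⬝ᵥ x - a₀)
    (g : Fin m → (Fin n → ℝ) → ℝ)
    (hg : ∀ k x, g k x = (1 / 2) * (x ⬝ᵥ (B k *ᵥ x)) - b k ⬝ᵥ x - β k)
    (σb : Fin m → ℝ) (hσ : 0 ≤ σb)
    (G : Matrix (Fin n) (Fin n) ℝ) (hG : G = A + ∑ k, σb k • B k)
    (F : Fin n → ℝ) (hF : F = a + ∑ k, σb k • b k)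
    (xb : Fin n → ℝ)
    (hstat : G *ᵥ xb = F)
    (hfeas : ∀ k, g k xb ≤ 0)
    (hcs : ∀ k, σb k * g k xb = 0)
    (hpsd : G.PosSemidef) :
    ∀ x : Fin n → ℝ, (∀ k, g k x ≤ 0) → P xb ≤ P x := by
  intro x hx
  have hGsym : Gᵀ = G := hpsd.1
  -- Lagrangian identity
  have Lx : ∀ y : Fin n → ℝ, (1/2) * (y ⬝ᵥ (G *ᵥ y)) - F ⬝ᵥ y
      = P y + a₀ + ∑ k, σb k * g k y + ∑ k, σb k * β k := by
    intro y
    rw [hG, hF, quad_expand', lin_expand', hP]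
    have h1 : ∑ k, σb k * g k y + ∑ k, σb k * β k
        = ∑ k, (σb k * ((1/2) * (y ⬝ᵥ (B k *ᵥ y))) - σb k * (b k ⬝ᵥ y)) := by
      rw [← Finset.sum_add_distrib]
      exact Finset.sum_congr rfl fun k _ => by rw [hg]; ring
    rw [add_assoc, h1, Finset.sum_sub_distrib, mul_add, Finset.mul_sum]
    have h2 : ∑ k, (1:ℝ)/2 * (σb k * (y ⬝ᵥ (B k *ᵥ y)))
        = ∑ k, σb k * ((1/2) * (y ⬝ᵥ (B k *ᵥ y))) :=
      Finset.sum_congr rfl fun k _ => by ring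
    rw [h2]
    ring
  -- key dot product facts
  have e1 : xb ⬝ᵥ (G *ᵥ x) = F ⬝ᵥ x := by
    rw [symm_dp' G hGsym xb x, hstat, dotProduct_comm]
  have e2 : xb ⬝ᵥ (G *ᵥ xb) = F ⬝ᵥ xb := by rw [hstat, dotProduct_comm]
  have e3 : x ⬝ᵥ (G *ᵥ xb) = F ⬝ᵥ x := by rw [hstat, dotProduct_comm]
  have hpos : 0 ≤ (x - xb) ⬝ᵥ (G *ᵥ (x - xb)) := by simpa using hpsd.dotProduct_mulVec_nonneg (x - xb)
  have expand : (x - xb) ⬝ᵥ (G *ᵥ (x - xb))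
      = x ⬝ᵥ (G *ᵥ x) - F ⬝ᵥ x - F ⬝ᵥ x + F ⬝ᵥ xb := by
    rw [Matrix.mulVec_sub, sub_dotProduct, dotProduct_sub, dotProduct_sub, e1, e2, e3]
    ring
  have hQ : (1/2) * (xb ⬝ᵥ (G *ᵥ xb)) - F ⬝ᵥ xb ≤ (1/2) * (x ⬝ᵥ (G *ᵥ x)) - F ⬝ᵥ x := by
    rw [e2]; linarith [hpos, expand]
  -- sums of multipliers
  have hsx : ∑ k, σb k * g k x ≤ 0 :=
    Finset.sum_nonpos fun k _ => mul_nonpos_of_nonneg_of_nonpos (hσ k) (hx k)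
  have hsxb : ∑ k, σb k * g k xb = 0 := Finset.sum_eq_zero fun k _ => hcs k
  have LX := Lx x
  have LXB := Lx xb
  rw [hsxb] at LXB
  linarith [hQ, LX, LXB, hsx]
end

section
/- Under the hypotheses of the global optimality condition, if in addition G(σ̄) is positive definite, then x̄ = G(σ̄)⁻¹ F(σ̄) is the unique solution of the stationarity equation and is a global minimizer of P on the feasible set; moreover, any other feasible global minimizer x satisfying P(x) = P(x̄) must equal x̄. -/
open Matrix
open scoped BigOperators


private lemma dot_sum_aux {n : ℕ} {ι : Type*} (x : Fin n → ℝ) (v : ι → Fin n → ℝ)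
    (s : Finset ι) : x ⬝ᵥ (∑ k ∈ s, v k) = ∑ k ∈ s, x ⬝ᵥ v k := by
  classical
  induction s using Finset.induction_on with
  | empty => simp
  | insert _ _ ha ih => simp [Finset.sum_insert ha, dotProduct_add, ih]

private lemma sum_dot_aux {n : ℕ} {ι : Type*} (x : Fin n → ℝ) (v : ι → Fin n → ℝ)
    (s : Finset ι) : (∑ k ∈ s, v k) ⬝ᵥ x = ∑ k ∈ s, v k ⬝ᵥ x := by
  classical
  induction s using Finset.induction_on with
  | empty => simp
  | insert _ _ ha ih => simp [Finset.sum_insert ha, add_dotProduct, ih]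

private lemma sum_mulVec_aux {n : ℕ} {ι : Type*} (M : ι → Matrix (Fin n) (Fin n) ℝ)
    (x : Fin n → ℝ) (s : Finset ι) : (∑ k ∈ s, M k) *ᵥ x = ∑ k ∈ s, M k *ᵥ x := by
  classical
  induction s using Finset.induction_on with
  | empty => simp
  | insert _ _ ha ih => simp [Finset.sum_insert ha, Matrix.add_mulVec, ih]

/-- Global optimality with positive definite `G(σb)`: uniqueness. -/
theorem global_optimality_posdef_unique
    (n m : ℕ)
    (A : Matrix (Fin n) (Fin n) ℝ) (B : Fin m → Matrix (Fin n) (Fin n) ℝ)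
    (a : Fin n → ℝ) (b : Fin m → Fin n → ℝ) (a₀ : ℝ) (β : Fin m → ℝ)
    (hA : A.IsSymm) (hB : ∀ k, (B k).IsSymm)
    (P : (Fin n → ℝ) → ℝ)
    (hP : ∀ x, P x = (1 / 2) * (x ⬝ᵥ (A *ᵥ x)) - a ⬝ᵥ x - a₀)
    (g : Fin m → (Fin n → ℝ) → ℝ)
    (hg : ∀ k x, g k x = (1 / 2) * (x ⬝ᵥ (B k *ᵥ x)) - b k ⬝ᵥ x - β k)
    (σb : Fin m → ℝ) (hσ : 0 ≤ σb)
    (G : Matrix (Fin n) (Fin n) ℝ) (hG : G = A + ∑ k, σb k • B k)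
    (F : Fin n → ℝ) (hF : F = a + ∑ k, σb k • b k)
    (xb : Fin n → ℝ)
    (hstat : G *ᵥ xb = F)
    (hfeas : ∀ k, g k xb ≤ 0)
    (hcs : ∀ k, σb k * g k xb = 0)
    (hpd : G.PosDef) :
    xb = G⁻¹ *ᵥ F ∧
    (∀ y : Fin n → ℝ, G *ᵥ y = F → y = xb) ∧
    (∀ x : Fin n → ℝ, (∀ k, g k x ≤ 0) → P xb ≤ P x) ∧
    (∀ x : Fin n → ℝ, (∀ k, g k x ≤ 0) → P x = P xb → x = xb) := by
  have hdet : IsUnit G.det := hpd.det_pos.ne'.isUnit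
  -- G is symmetric
  have hGsymm : Gᵀ = G := by
    rw [hG, transpose_add, transpose_sum]
    simp only [transpose_smul]
    rw [hA.eq]
    congr 1
    exact Finset.sum_congr rfl fun k _ => by rw [(hB k).eq]
  -- Lagrangian identity
  have hL : ∀ x : Fin n → ℝ,
      P x + ∑ k, σb k * g k x
        = (1 / 2) * (x ⬝ᵥ (G *ᵥ x)) - F ⬝ᵥ x - (a₀ + ∑ k, σb k * β k) := by
    intro x
    have hsum1 : x ⬝ᵥ ((∑ k, σb k • B k) *ᵥ x) = ∑ k, σb k * (x ⬝ᵥ (B k *ᵥ x)) := by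
      rw [sum_mulVec_aux, dot_sum_aux]
      refine Finset.sum_congr rfl fun k _ => ?_
      rw [smul_mulVec, dotProduct_smul, smul_eq_mul]
    have hsum2 : (∑ k, σb k • b k) ⬝ᵥ x = ∑ k, σb k * (b k ⬝ᵥ x) := by
      rw [sum_dot_aux]
      refine Finset.sum_congr rfl fun k _ => ?_
      rw [smul_dotProduct, smul_eq_mul]
    rw [hP, hG, hF]
    simp only [hg, add_mulVec, dotProduct_add, add_dotProduct, hsum1, hsum2,
      mul_sub, Finset.sum_sub_distrib, Finset.mul_sum]
    have e : ∑ k, σb k * ((1 : ℝ)/2 * (x ⬝ᵥ (B k *ᵥ x)))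
        = (1/2) * ∑ k, σb k * (x ⬝ᵥ (B k *ᵥ x)) := by
      rw [Finset.mul_sum]
      exact Finset.sum_congr rfl fun k _ => by ring
    rw [e]
    ring
  -- symmetry in the bilinear form
  have hsymmdot : ∀ x y : Fin n → ℝ, x ⬝ᵥ (G *ᵥ y) = y ⬝ᵥ (G *ᵥ x) := by
    intro x y
    rw [dotProduct_mulVec, ← mulVec_transpose, hGsymm, dotProduct_comm]
  -- quadratic expansion
  have hquad : ∀ x : Fin n → ℝ,
      (x - xb) ⬝ᵥ (G *ᵥ (x - xb))
        = x ⬝ᵥ (G *ᵥ x) - 2 * (F ⬝ᵥ x) + F ⬝ᵥ xb := by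
    intro x
    have h1 : xb ⬝ᵥ (G *ᵥ x) = F ⬝ᵥ x := by rw [hsymmdot, hstat, dotProduct_comm]
    have h2 : xb ⬝ᵥ (G *ᵥ xb) = F ⬝ᵥ xb := by rw [hstat, dotProduct_comm]
    have h3 : x ⬝ᵥ (G *ᵥ xb) = F ⬝ᵥ x := by rw [hsymmdot]; exact h1
    simp only [mulVec_sub, sub_dotProduct, dotProduct_sub, h1, h2, h3]
    ring
  have hcs' : ∑ k, σb k * g k xb = 0 := by
    simp [hcs]
  -- key inequality: for feasible x, P x - P xb ≥ ½ (x - xb)ᵀ G (x - xb)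
  have hkey : ∀ x : Fin n → ℝ, (∀ k, g k x ≤ 0) →
      (1 / 2) * ((x - xb) ⬝ᵥ (G *ᵥ (x - xb))) ≤ P x - P xb := by
    intro x hx
    have hs : ∑ k, σb k * g k x ≤ 0 := by
      apply Finset.sum_nonpos
      intro k _
      exact mul_nonpos_of_nonneg_of_nonpos (hσ k) (hx k)
    have e1 := hL x
    have e2 := hL xb
    rw [hcs', add_zero] at e2
    have hx2 : xb ⬝ᵥ (G *ᵥ xb) = F ⬝ᵥ xb := by rw [hstat, dotProduct_comm]
    rw [hquad]
    nlinarith [hs, e1, e2, hx2]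
  refine ⟨?_, ?_, ?_, ?_⟩
  · rw [← hstat, mulVec_mulVec, nonsing_inv_mul G hdet, one_mulVec]
  · intro y hy
    have := Matrix.mulVec_injective_iff_isUnit.mpr (isUnit_iff_isUnit_det G |>.mpr hdet)
    exact this (hy.trans hstat.symm)
  · intro x hx
    have h1 := hkey x hx
    have h2 : 0 ≤ (x - xb) ⬝ᵥ (G *ᵥ (x - xb)) := by
      rcases eq_or_ne (x - xb) 0 with h | h
      · simp [h]
      · have := hpd.dotProduct_mulVec_pos h
        simp only [star_trivial] at this
        exact this.le
    linarith
  · intro x hx hPx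
    have h1 := hkey x hx
    rw [hPx, sub_self] at h1
    by_contra hne
    have h : x - xb ≠ 0 := sub_ne_zero_of_ne hne
    have := hpd.dotProduct_mulVec_pos h
    simp only [star_trivial] at this
    linarith
end

section
/- Global optimality for g01: for every x ∈ ℝ^13 satisfying all the constraints of problem g01, f(x) ≥ −15, with equality at x* = (1,1,1,1,1,1,1,1,1,3,3,3,1). -/
/-- Global optimality for g01: every feasible point has objective value at least −15,
with equality at `x* = (1,…,1,3,3,3,1)`. -/
theorem g01_global_optimality
    (f : (Fin 13 → ℝ) → ℝ)
    (hf : ∀ x : Fin 13 → ℝ,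
      f x = 5 * (x 0 + x 1 + x 2 + x 3)
        - 5 * ((x 0) ^ 2 + (x 1) ^ 2 + (x 2) ^ 2 + (x 3) ^ 2)
        - (x 4 + x 5 + x 6 + x 7 + x 8 + x 9 + x 10 + x 11 + x 12)) :
    (∀ x : Fin 13 → ℝ,
      (2 * x 0 + 2 * x 1 + x 9 + x 10 - 10 ≤ 0) →
      (2 * x 0 + 2 * x 2 + x 9 + x 11 - 10 ≤ 0) →
      (2 * x 1 + 2 * x 2 + x 10 + x 11 - 10 ≤ 0) →
      (-8 * x 0 + x 9 ≤ 0) →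
      (-8 * x 1 + x 10 ≤ 0) →
      (-8 * x 2 + x 11 ≤ 0) →
      (-2 * x 3 - x 4 + x 9 ≤ 0) →
      (-2 * x 5 - x 6 + x 10 ≤ 0) →
      (-2 * x 7 - x 8 + x 11 ≤ 0) →
      (∀ i : Fin 13, i.val ≤ 8 → 0 ≤ x i ∧ x i ≤ 1) →
      (∀ i : Fin 13, 9 ≤ i.val ∧ i.val ≤ 11 → 0 ≤ x i ∧ x i ≤ 100) →
      (0 ≤ x 12 ∧ x 12 ≤ 1) →
      -15 ≤ f x) ∧
    f ![1, 1, 1, 1, 1, 1, 1, 1, 1, 3, 3, 3, 1] = -15 := by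
  constructor
  · intro x _ _ _ _ _ _ g7 g8 g9 hbox _ h12
    have h0 := hbox 0 (by decide)
    have h1 := hbox 1 (by decide)
    have h2 := hbox 2 (by decide)
    have h3 := hbox 3 (by decide)
    have h4 := hbox 4 (by decide)
    have h5 := hbox 5 (by decide)
    have h6 := hbox 6 (by decide)
    have h7 := hbox 7 (by decide)
    have h8 := hbox 8 (by decide)
    rw [hf]
    nlinarith [mul_nonneg h0.1 (sub_nonneg.2 h0.2), mul_nonneg h1.1 (sub_nonneg.2 h1.2),
      mul_nonneg h2.1 (sub_nonneg.2 h2.2), mul_nonneg h3.1 (sub_nonneg.2 h3.2),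
      h4.2, h5.2, h6.2, h7.2, h8.2, h12.2, g7, g8, g9]
  · rw [hf]
    show (5:ℝ)*(1+1+1+1) - 5*(1^2+1^2+1^2+1^2) - (1+1+1+1+1+3+3+3+1) = -15
    norm_num
end
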